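/- Corner Lemma: Let F be an S-constructible persistence module valued in a skeletally small abelian category C, let I = [p,q) ∈ Dgm, and let ε > 0 be such that the box □_ε I is nonempty. If q ≠ ∞, then Σ_{J ∈ □_ε I} F̃(J) = dF([p+ε, q−ε)) − dF([p+ε, q+ε)) + dF([p−ε, q+ε)) − dF([p−ε, q−ε)). If q = ∞, then Σ_{J ∈ □_ε I} F̃(J) = dF([p+ε, ∞)) − dF([p−ε, ∞)). -/

import Mathlib

open CategoryTheory CategoryTheory.Limits
open scoped Classical ENNReal

noncomputable section

universe v u

/-! ## The poset of intervals -/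

/-- `Rbar` is `ℝ ∪ {∞}`. -/
abbrev Rbar := WithTop ℝ

/-- An element of the poset `Dgm`: an interval `[p, q)` with `p ≤ q` in `ℝ ∪ {∞}`. -/
structure PDInterval where
  p : Rbar
  q : Rbar
  hle : p ≤ q

namespace PDInterval

/-- `I.Sub J` means `I ⊆ J` as intervals, i.e. `J.p ≤ I.p` and `I.q ≤ J.q`. -/
def Sub (I J : PDInterval) : Prop := J.p ≤ I.p ∧ I.q ≤ J.q

/-- The diagonal `Δ ⊆ Dgm` consists of the empty intervals `[p, p)`. -/
def onDiag (I : PDInterval) : Prop := I.p = I.q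

/-- The interval `[a, b)` with real endpoints. -/
def mk' (a b : ℝ) (h : a ≤ b) : PDInterval := ⟨(a : Rbar), (b : Rbar), by exact_mod_cast h⟩

/-- The interval `[a, ∞)`. -/
def mkInf (a : ℝ) : PDInterval := ⟨(a : Rbar), ⊤, le_top⟩

/-- Membership in `Dgm(S)`, where `S` is a finite set of reals together (implicitly)
with `∞`: both endpoints of `I` lie in `S ∪ {∞}`. -/
def memDgmS (S : Finset ℝ) (I : PDInterval) : Prop :=
  (I.p = ⊤ ∨ ∃ s ∈ S, I.p = (s : Rbar)) ∧ (I.q = ⊤ ∨ ∃ s ∈ S, I.q = (s : Rbar))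

/-- The `ε`-box around an interval `I = [p, q)`: all intervals `[r, s)` with
`p - ε < r ≤ p + ε` and `q - ε ≤ s < q + ε`, declared empty if `q - ε ≤ p + ε`.
For `q = ∞` it consists of the intervals `[r, ∞)` with `p - ε < r ≤ p + ε`. -/
def box (ε : ℝ) (I : PDInterval) : Set PDInterval :=
  if I.p = ⊤ then ∅
  else if I.q = ⊤ then
    { J | J.q = ⊤ ∧ ∃ r : ℝ, J.p = (r : Rbar) ∧
        I.p.untopD 0 - ε < r ∧ r ≤ I.p.untopD 0 + ε }
  else if I.q.untopD 0 - ε ≤ I.p.untopD 0 + ε then ∅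
  else
    { J | ∃ r s : ℝ, J.p = (r : Rbar) ∧ J.q = (s : Rbar) ∧
        I.p.untopD 0 - ε < r ∧ r ≤ I.p.untopD 0 + ε ∧
        I.q.untopD 0 - ε ≤ s ∧ s < I.q.untopD 0 + ε }

/-- The distance between two endpoints in `ℝ ∪ {∞}`; it is `∞` if exactly one of the two
endpoints is `∞`. -/
def edist' : Rbar → Rbar → ℝ≥0∞ := fun a b =>
  if a = ⊤ then (if b = ⊤ then 0 else ⊤)
  else if b = ⊤ then ⊤
  else ENNReal.ofReal |a.untopD 0 - b.untopD 0|

/-- The distance `max (|p₁ - p₂|, |q₁ - q₂|)` between two intervals. -/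
def pairDist (I J : PDInterval) : ℝ≥0∞ := max (edist' I.p J.p) (edist' I.q J.q)

end PDInterval

/-! ## Matchings and the bottleneck distance -/

section Matching

variable {G : Type*} [AddCommGroup G]

/-- A matching between two finitely supported functions `Y₁ Y₂ : Dgm → G`:
a map `γ : Dgm × Dgm → G` whose row sums give `Y₁` off the diagonal and whose column
sums give `Y₂` off the diagonal. -/
def IsMatching (Y₁ Y₂ : PDInterval → G) (γ : PDInterval → PDInterval → G) : Prop :=
  (∀ I : PDInterval, ¬ I.onDiag →
    (Function.support (γ I)).Finite ∧ Y₁ I = ∑ᶠ J, γ I J) ∧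
  (∀ J : PDInterval, ¬ J.onDiag →
    (Function.support (fun I => γ I J)).Finite ∧ Y₂ J = ∑ᶠ I, γ I J)

/-- The norm of a matching: the supremum of `max (|p₁ - p₂|, |q₁ - q₂|)` over all pairs
`I = [p₁, q₁)`, `J = [p₂, q₂)` with `γ I J ≠ 0`. -/
def matchingNorm (γ : PDInterval → PDInterval → G) : ℝ≥0∞ :=
  ⨆ (I : PDInterval) (J : PDInterval) (_ : γ I J ≠ 0), PDInterval.pairDist I J

/-- The bottleneck distance between two persistence diagrams: the infimum of the norms
of all matchings between them. -/
def bottleneckDist (Y₁ Y₂ : PDInterval → G) : ℝ≥0∞ :=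
  ⨅ (γ : PDInterval → PDInterval → G) (_ : IsMatching Y₁ Y₂ γ), matchingNorm γ

end Matching

/-! ## Persistence modules, constructibility, interleavings -/

section PersMod

variable (C : Type u) [Category.{v} C]

/-- A persistence module `F : (ℝ, ≤) → C` is `S`-constructible (for a finite set
`S = {s₁ < ⋯ < s_k} ⊆ ℝ`, to which `∞` is implicitly adjoined) if `F p` is a zero object
for `p < s₁` and `F (p ≤ q)` is an isomorphism whenever no element of `S` lies in `(p, q]`
and some element of `S` is `≤ p`. -/
def IsConstructibleOn (F : ℝ ⥤ C) (S : Finset ℝ) : Prop :=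
  (∀ p : ℝ, (∀ s ∈ S, p < s) → IsZero (F.obj p)) ∧
  (∀ (p q : ℝ) (h : p ≤ q), (∃ s ∈ S, s ≤ p) → (∀ s ∈ S, s ≤ p ∨ q < s) →
    IsIso (F.map (homOfLE h)))

/-- A persistence module is constructible if it is `S`-constructible for some finite `S`. -/
def IsConstructible (F : ℝ ⥤ C) : Prop := ∃ S : Finset ℝ, IsConstructibleOn C F S

/-- The underlying type of the poset `ℝ ×_ε {0, 1}`. -/
def InterPoset (_ : ℝ) : Type := ℝ × Bool

namespace InterPoset

variable (ε : ℝ)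

/-- The partial order on `ℝ ×_ε {0, 1}`: `(p, t) ≤ (q, s)` iff `t = s` and `p ≤ q`, or
`t ≠ s` and `p + ε ≤ q`.  (For `ε < 0` we use `max ε 0` in place of `ε` so that the
order is well defined; all statements only use `ε ≥ 0`, where this agrees with the paper.) -/
instance : Preorder (InterPoset ε) where
  le x y := x.1 + (if x.2 = y.2 then 0 else max ε 0) ≤ y.1
  le_refl x := by simp
  le_trans x y z h₁ h₂ := by
    have hm : (0 : ℝ) ≤ max ε 0 := le_max_right _ _
    by_cases h12 : x.2 = y.2 <;> by_cases h23 : y.2 = z.2 <;>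
      [skip; skip; skip; have hxz : x.2 = z.2 := by
        revert h12 h23; cases x.2 <;> cases y.2 <;> cases z.2 <;> simp] <;>
      simp_all <;> linarith [le_max_right ε (0:ℝ)]

/-- The embedding `ι₀ : ℝ → ℝ ×_ε {0, 1}`, `p ↦ (p, 0)`. -/
def iota0 : ℝ ⥤ InterPoset ε :=
  Monotone.functor (f := fun p => ((p, false) : InterPoset ε))
    (fun _ _ h => by simpa [(· ≤ ·)] using h)

/-- The embedding `ι₁ : ℝ → ℝ ×_ε {0, 1}`, `p ↦ (p, 1)`. -/
def iota1 : ℝ ⥤ InterPoset ε :=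
  Monotone.functor (f := fun p => ((p, true) : InterPoset ε))
    (fun _ _ h => by simpa [(· ≤ ·)] using h)

end InterPoset

/-- Two persistence modules `F` and `G` are `ε`-interleaved if there is a functor
`Φ : ℝ ×_ε {0, 1} → C` whose restrictions along `ι₀` and `ι₁` are naturally isomorphic
to `F` and `G` respectively. -/
def Interleaved (F G : ℝ ⥤ C) (ε : ℝ) : Prop :=
  ∃ Φ : InterPoset ε ⥤ C,
    Nonempty (InterPoset.iota0 ε ⋙ Φ ≅ F) ∧ Nonempty (InterPoset.iota1 ε ⋙ Φ ≅ G)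

/-- The interleaving distance: the infimum of all `ε ≥ 0` such that `F` and `G` are
`ε`-interleaved (`∞` if there is no interleaving). -/
def interleavingDist (F G : ℝ ⥤ C) : ℝ≥0∞ :=
  sInf { x : ℝ≥0∞ | ∃ ε : ℝ, 0 ≤ ε ∧ Interleaved C F G ε ∧ x = ENNReal.ofReal ε }

end PersMod

/-! ## The Grothendieck group -/

section K0

variable (C : Type u) [Category.{v} C] [Limits.HasZeroMorphisms C]

/-- The subgroup of relations coming from short exact sequences `0 → a → b → c → 0`:
it is generated by the elements `[b] - ([a] + [c])`. -/
def sesRelations : AddSubgroup (FreeAbelianGroup C) :=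
  AddSubgroup.closure { x | ∃ S : ShortComplex C, S.ShortExact ∧
    x = FreeAbelianGroup.of S.X₂ - (FreeAbelianGroup.of S.X₁ + FreeAbelianGroup.of S.X₃) }

/-- The Grothendieck group of `C`: the free abelian group on the objects of `C` modulo one
relation `[b] = [a] + [c]` for each short exact sequence `0 → a → b → c → 0`.  (Isomorphic
objects automatically get identified, via the short exact sequences `0 → a → b → 0 → 0`.) -/
def K0 : Type u := FreeAbelianGroup C ⧸ sesRelations C

instance : AddCommGroup (K0 C) := by unfold K0; infer_instance

/-- The class `[a] ∈ K0 C` of an object `a` of `C`. -/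
def K0.mk (a : C) : K0 C := QuotientAddGroup.mk (FreeAbelianGroup.of a)

/-- The translation-invariant partial order on the Grothendieck group:
`x ⪯ y` iff `y - x = [c]` for some object `c` of `C`. -/
def K0.le (x y : K0 C) : Prop := ∃ c : C, y - x = K0.mk C c

end K0

/-! ## The rank function and the persistence diagram -/

section Rank

variable (C : Type u) [Category.{v} C] [Abelian C]

/-- The class in `K0 C` of the image of the structure map `F (a ≤ b)`. -/
def K0.imageClass (F : ℝ ⥤ C) {a b : ℝ} (h : a ≤ b) : K0 C :=
  K0.mk C (Limits.image (F.map (homOfLE h)))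

/-- The hypothesis on the auxiliary constant `δ > 0` used to define the rank function of an
`S`-constructible module: `s_{i-1} < s_i - δ` for consecutive elements of `S`. -/
def GoodDelta (S : Finset ℝ) (δ : ℝ) : Prop :=
  0 < δ ∧ ∀ s ∈ S, ∀ s' ∈ S, s < s' → s < s' - δ

/-- The rank function `dF : Dgm → K0 C` of an `S`-constructible persistence module `F`
(relative to the auxiliary constant `δ`): for `I = [p, s)` with `s ∈ S` it is the class of
the image of `F (p ≤ s - δ)`; for `I = [p, ∞)` it is the class of the image of `F (p ≤ z)`
for `z ≥ max p (max S)`; and for all other `I = [p, q)` it is the class of the image of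
`F (p ≤ q)`.  (Endpoints are adjusted, using constructibility, so that the formula makes
sense for every interval of `Dgm`.) -/
def rankFn (F : ℝ ⥤ C) (S : Finset ℝ) (δ : ℝ) (I : PDInterval) : K0 C :=
  let M : ℝ := (if h : S.Nonempty then S.max' h else 0) + 1
  let lp : ℝ := I.p.untopD M
  let q' : ℝ :=
    if I.q = ⊤ then max lp M
    else if I.q.untopD 0 ∈ S then I.q.untopD 0 - δ else I.q.untopD 0
  K0.imageClass C F (min_le_right lp q')

/-- `Ft` is the persistence diagram of the `S`-constructible module `F` (with rank function
taken relative to `δ`): it is finitely supported and satisfies the Möbius inversion formula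
`dF I = ∑_{J ⊇ I} Ft J` for every interval `I ∈ Dgm`. -/
def IsPersDiagramOf (F : ℝ ⥤ C) (S : Finset ℝ) (δ : ℝ) (Ft : PDInterval → K0 C) : Prop :=
  (Function.support Ft).Finite ∧
  ∀ I : PDInterval, rankFn C F S δ I = ∑ᶠ (J : PDInterval) (_ : I.Sub J), Ft J

end Rank

end


section Aux

lemma finsum_mem_eq_T {G : Type*} [AddCommGroup G] (Ft : PDInterval → G)
    (hfin : (Function.support Ft).Finite) (s : Set PDInterval) :
    ∑ᶠ J ∈ s, Ft J = ∑ J ∈ hfin.toFinset, Set.indicator s Ft J := by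
  rw [finsum_mem_def]
  apply finsum_eq_finset_sum_of_support_subset
  intro x hx
  simp only [Function.mem_support, Set.indicator_apply, ne_eq] at hx
  by_cases hmem : x ∈ s
  · simp only [hmem, if_true] at hx
    simpa using hx
  · simp [hmem] at hx

lemma ind4 {G : Type*} [AddCommGroup G] (g : G) {A C U V : Prop}
    [Decidable A] [Decidable C] [Decidable U] [Decidable V]
    [Decidable (¬C ∧ A ∧ U ∧ ¬V)] [Decidable (A ∧ U)] [Decidable (A ∧ V)]
    [Decidable (C ∧ V)] [Decidable (C ∧ U)]
    (hCA : C → A) (hVU : V → U) :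
    (if ¬C ∧ A ∧ U ∧ ¬V then g else 0) =
      (if A ∧ U then g else 0) - (if A ∧ V then g else 0) +
      (if C ∧ V then g else 0) - (if C ∧ U then g else 0) := by
  by_cases hA : A <;> by_cases hC : C <;> by_cases hU : U <;> by_cases hV : V <;>
    simp_all <;> abel

lemma ind2 {G : Type*} [AddCommGroup G] (g : G) {A C : Prop}
    [Decidable A] [Decidable C] [Decidable (¬C ∧ A)]
    (hCA : C → A) :
    (if ¬C ∧ A then g else 0) = (if A then g else 0) - (if C then g else 0) := by
  by_cases hA : A <;> by_cases hC : C <;> simp_all <;> abel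

end Aux

/-- **Corner Lemma** (Lemma 5.2): Let `F` be an `S`-constructible persistence module valued
in a skeletally small abelian category, `I = [p, q)` an interval and `ε > 0` such that the
box `□_ε I` is nonempty.  If `q ≠ ∞` then
`∑_{J ∈ □_ε I} F̃(J) = dF([p+ε, q-ε)) - dF([p+ε, q+ε)) + dF([p-ε, q+ε)) - dF([p-ε, q-ε))`,
and if `q = ∞` then `∑_{J ∈ □_ε I} F̃(J) = dF([p+ε, ∞)) - dF([p-ε, ∞))`. -/
theorem corner_lemma {C : Type u} [Category.{v} C] [Abelian C]
    (F : ℝ ⥤ C) (S : Finset ℝ) (δ : ℝ)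
    (hF : IsConstructibleOn C F S) (hδ : GoodDelta S δ)
    (Ft : PDInterval → K0 C) (hFt : IsPersDiagramOf C F S δ Ft)
    (ε : ℝ) (hε : 0 < ε) :
    (∀ (p q : ℝ) (hpq : p + ε < q - ε),
      ∑ᶠ J ∈ PDInterval.box ε (PDInterval.mk' p q (by linarith)), Ft J =
        rankFn C F S δ (PDInterval.mk' (p + ε) (q - ε) (by linarith)) -
        rankFn C F S δ (PDInterval.mk' (p + ε) (q + ε) (by linarith)) +
        rankFn C F S δ (PDInterval.mk' (p - ε) (q + ε) (by linarith)) -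
        rankFn C F S δ (PDInterval.mk' (p - ε) (q - ε) (by linarith))) ∧
    (∀ p : ℝ,
      ∑ᶠ J ∈ PDInterval.box ε (PDInterval.mkInf p), Ft J =
        rankFn C F S δ (PDInterval.mkInf (p + ε)) -
        rankFn C F S δ (PDInterval.mkInf (p - ε))) := by
  obtain ⟨hfin, hmob⟩ := hFt
  have key : ∀ I : PDInterval, rankFn C F S δ I =
      ∑ J ∈ hfin.toFinset, Set.indicator {J | I.Sub J} Ft J := by
    intro I
    rw [hmob I]
    exact finsum_mem_eq_T Ft hfin {J | I.Sub J}
  constructor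
  · intro p q hpq
    rw [finsum_mem_eq_T Ft hfin, key, key, key, key,
      ← Finset.sum_sub_distrib, ← Finset.sum_add_distrib, ← Finset.sum_sub_distrib]
    refine Finset.sum_congr rfl fun J _ => ?_
    obtain ⟨Jp, Jq, hJ⟩ := J
    have hbox : ∀ (Jp Jq : Rbar) (hJ : Jp ≤ Jq), ((⟨Jp, Jq, hJ⟩ : PDInterval) ∈
        PDInterval.box ε (PDInterval.mk' p q (by linarith))) =
        ∃ r s : ℝ, Jp = (r : Rbar) ∧ Jq = (s : Rbar) ∧
          p - ε < r ∧ r ≤ p + ε ∧ q - ε ≤ s ∧ s < q + ε := by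
      intro Jp Jq hJ
      rw [PDInterval.box]
      simp only [PDInterval.mk', WithTop.coe_ne_top, if_false, WithTop.untopD_coe]
      show ((⟨Jp, Jq, hJ⟩ : PDInterval) ∈ if q - ε ≤ p + ε then (∅ : Set PDInterval) else
        {J : PDInterval | ∃ r s : ℝ, J.p = (r : Rbar) ∧ J.q = (s : Rbar) ∧
          p - ε < r ∧ r ≤ p + ε ∧ q - ε ≤ s ∧ s < q + ε}) = _
      rw [if_neg (by linarith)]
      rfl
    simp only [Set.indicator_apply, Set.mem_setOf_eq, hbox]
    simp only [PDInterval.Sub, PDInterval.mk']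
    induction Jp using WithTop.recTopCoe with
    | top => simp
    | coe r =>
      induction Jq using WithTop.recTopCoe with
      | top => simp
      | coe s =>
        simp only [WithTop.coe_le_coe, WithTop.coe_inj, exists_and_left, exists_eq_left',
          ← not_le]
        exact ind4 _ (fun h => by linarith) (fun h => by linarith)
  · intro p
    rw [finsum_mem_eq_T Ft hfin, key, key, ← Finset.sum_sub_distrib]
    refine Finset.sum_congr rfl fun J _ => ?_
    obtain ⟨Jp, Jq, hJ⟩ := J
    have hbox : ∀ (Jp Jq : Rbar) (hJ : Jp ≤ Jq), ((⟨Jp, Jq, hJ⟩ : PDInterval) ∈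
        PDInterval.box ε (PDInterval.mkInf p)) =
        (Jq = ⊤ ∧ ∃ r : ℝ, Jp = (r : Rbar) ∧ p - ε < r ∧ r ≤ p + ε) := by
      intro Jp Jq hJ
      rw [PDInterval.box]
      simp only [PDInterval.mkInf, WithTop.coe_ne_top, if_false, if_true,
        WithTop.untopD_coe]
      rfl
    simp only [Set.indicator_apply, Set.mem_setOf_eq, hbox]
    simp only [PDInterval.Sub, PDInterval.mkInf, top_le_iff]
    induction Jp using WithTop.recTopCoe with
    | top => simp
    | coe r =>
      induction Jq using WithTop.recTopCoe with
      | top =>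
        simp only [WithTop.coe_le_coe, WithTop.coe_inj, exists_and_left, exists_eq_left',
          and_true, true_and, ← not_le]
        exact ind2 _ (fun h => by linarith)
      | coe s => simp
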